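/- Let a ≥ 0 be real and let T_a be the unique analytic function on ℂ∖(−∞,−1] agreeing with x ↦ cos(a·arccos x) on (−1,1]. Then, as z → −1 within ℂ∖(−∞,−1], T_a(z) − cos(aπ) − a√2·sin(aπ)·√(z+1) = O(z+1), where √ denotes the principal complex square root. -/

import Mathlib

open Asymptotics Filter

/-- The cut plane `ℂ ∖ (−∞, −1]`. -/
def cutC : Set ℂ := {z : ℂ | z.im = 0 ∧ z.re ≤ -1}ᶜ

/-- `T` is an analytic function on the cut plane `ℂ ∖ (−∞, −1]` agreeing with
`x ↦ cos (a · arccos x)` on `(−1, 1]`. -/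
def IsChebyshev (a : ℝ) (T : ℂ → ℂ) : Prop :=
  (∀ z ∈ cutC, DifferentiableAt ℂ T z) ∧
  ∀ x : ℝ, x ∈ Set.Ioc (-1 : ℝ) 1 → T (x : ℂ) = ((Real.cos (a * Real.arccos x) : ℝ) : ℂ)

noncomputable section
namespace Cheb6
open Complex

def sqz (z : ℂ) : ℂ := z ^ ((1:ℂ)/2)

lemma sq_sqz (z : ℂ) : sqz z ^ 2 = z := by
  have := Complex.cpow_nat_inv_pow z (two_ne_zero (α := ℕ))
  simpa [sqz, one_div] using this

def zeta (z : ℂ) : ℂ := z + Complex.I * sqz (1 - z) * sqz (z + 1)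

def U : Set ℂ := {z : ℂ | z + 1 ∈ Complex.slitPlane ∧ z.re < 1}

lemma mem_cutC {z : ℂ} : z ∈ cutC ↔ z + 1 ∈ Complex.slitPlane := by
  simp only [cutC, Set.mem_compl_iff, Set.mem_setOf_eq, Complex.mem_slitPlane_iff,
    Complex.add_re, Complex.add_im, Complex.one_re, Complex.one_im, add_zero]
  constructor
  · intro h
    by_cases him : z.im = 0
    · left; by_contra h'; exact h ⟨him, by linarith [not_lt.mp h']⟩
    · right; exact him
  · rintro (h | h) ⟨h1, h2⟩ <;> [linarith; exact h h1]

lemma U_sub : U ⊆ cutC := fun z hz => mem_cutC.mpr hz.1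

lemma U_open : IsOpen U := by
  have h1 : IsOpen {z : ℂ | z + 1 ∈ Complex.slitPlane} :=
    Complex.isOpen_slitPlane.preimage (by continuity)
  have h2 : IsOpen {z : ℂ | z.re < 1} :=
    isOpen_lt Complex.continuous_re continuous_const
  exact h1.inter h2

lemma zero_mem_U : (0:ℂ) ∈ U := by
  constructor
  · simp [Complex.mem_slitPlane_iff]
  · simp

lemma U_star : StarConvex ℝ (0:ℂ) U := by
  intro y hy s t hs ht hst
  rcases eq_or_lt_of_le ht with h1 | htpos
  · simpa [← h1] using zero_mem_U
  rcases eq_or_lt_of_le (le_of_eq (by linarith : t = t) |>.trans (le_refl t)) with _ | _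
  all_goals
  · rcases eq_or_lt_of_le (show t ≤ 1 by linarith) with h2 | htlt
    · simpa [h2, show s = 0 by linarith] using hy
    · have hre : (s • (0:ℂ) + t • y).re = t * y.re := by
        simp [Complex.smul_re]
      have him : (s • (0:ℂ) + t • y).im = t * y.im := by
        simp [Complex.smul_im]
      constructor
      · rcases hy.1 with h | h
        · left
          simp only [Complex.add_re, Complex.add_im, Complex.one_re, hre]
          have : 0 < y.re + 1 := by
            simpa [Complex.add_re, Complex.one_re] using h
          nlinarith
        · right
          simp only [Complex.add_im, Complex.one_im, him, add_zero]
          have : y.im ≠ 0 := by simpa [Complex.add_im, Complex.one_im] using h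
          positivity
      · simp only [Set.mem_setOf_eq, hre]
        rcases le_or_gt y.re 0 with h | h
        · nlinarith
        · nlinarith [hy.2]

lemma U_preconnected : IsPreconnected U := by
  have h1 : ContractibleSpace U := U_star.contractibleSpace ⟨0, zero_mem_U⟩
  have h2 : IsPathConnected U := isPathConnected_iff_pathConnectedSpace.mpr inferInstance
  exact h2.isConnected.isPreconnected

def G (a : ℝ) (z : ℂ) : ℂ := (zeta z ^ (a:ℂ) + zeta z ^ (-a:ℂ)) / 2

lemma zeta_inv (z : ℂ) : zeta z * (z - Complex.I * sqz (1 - z) * sqz (z + 1)) = 1 := by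
  have h : (Complex.I * sqz (1 - z) * sqz (z + 1)) ^ 2 = z ^ 2 - 1 := by
    rw [mul_pow, mul_pow, Complex.I_sq, sq_sqz, sq_sqz]; ring
  unfold zeta
  linear_combination -h

lemma zeta_ne_zero (z : ℂ) : zeta z ≠ 0 :=
  left_ne_zero_of_mul_eq_one (zeta_inv z)

lemma two_z_eq (z : ℂ) : 2 * z = zeta z + (zeta z)⁻¹ := by
  have h := zeta_inv z
  have h2 : (zeta z)⁻¹ = z - Complex.I * sqz (1 - z) * sqz (z + 1) :=
    (eq_inv_of_mul_eq_one_right h).symm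
  rw [h2]; unfold zeta; ring

lemma zeta_mem_slitPlane {z : ℂ} (hz : z ∈ U) : zeta z ∈ Complex.slitPlane := by
  by_contra h
  have h1 : (zeta z).re ≤ 0 ∧ (zeta z).im = 0 := by
    rw [Complex.mem_slitPlane_iff, not_or] at h
    exact ⟨le_of_not_gt h.1, not_ne_iff.mp h.2⟩
  set t : ℝ := (zeta z).re with htdef
  have hζ : zeta z = (t : ℂ) := Complex.ext rfl (by simp [h1.2])
  have htne : t ≠ 0 := by
    intro h0
    exact zeta_ne_zero z (by rw [hζ, h0]; simp)
  have htneg : t < 0 := lt_of_le_of_ne h1.1 htne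
  have h2z : 2 * z = (t : ℂ) + (t⁻¹ : ℝ) := by
    have := two_z_eq z
    rw [hζ] at this
    push_cast at this ⊢
    exact this
  have hzre : z.re = (t + t⁻¹) / 2 := by
    have := congrArg Complex.re h2z
    simp at this
    linarith
  have hzim : z.im = 0 := by
    have := congrArg Complex.im h2z
    simp at this
    linarith
  have hbound : t + t⁻¹ ≤ -2 := by
    have h1 : (t + 1)^2 ≥ 0 := sq_nonneg _
    have : t * (t + t⁻¹ + 2) ≥ 0 := by
      have : t * t⁻¹ = 1 := mul_inv_cancel₀ htne
      nlinarith
    nlinarith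
  rcases hz.1 with h | h
  · simp only [Complex.add_re, Complex.one_re] at h
    rw [hzre] at h; linarith
  · simp [Complex.add_im, Complex.one_im, hzim] at h

lemma one_sub_mem {z : ℂ} (hz : z ∈ U) : 1 - z ∈ Complex.slitPlane := by
  rw [Complex.mem_slitPlane_iff]
  left
  simp only [Complex.sub_re, Complex.one_re]
  linarith [hz.2]

lemma zeta_diff {z : ℂ} (hz : z ∈ U) : DifferentiableAt ℂ zeta z := by
  have h1 : DifferentiableAt ℂ (fun z : ℂ => sqz (1 - z)) z := by
    apply DifferentiableAt.cpow
    · fun_prop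
    · fun_prop
    · exact one_sub_mem hz
  have h2 : DifferentiableAt ℂ (fun z : ℂ => sqz (z + 1)) z := by
    apply DifferentiableAt.cpow
    · fun_prop
    · fun_prop
    · exact hz.1
  unfold zeta sqz at *
  fun_prop

lemma G_diff (a : ℝ) {z : ℂ} (hz : z ∈ U) : DifferentiableAt ℂ (G a) z := by
  have h1 : DifferentiableAt ℂ (fun z => zeta z ^ (a:ℂ)) z :=
    (zeta_diff hz).cpow (differentiableAt_const _) (zeta_mem_slitPlane hz)
  have h2 : DifferentiableAt ℂ (fun z => zeta z ^ (-a:ℂ)) z :=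
    (zeta_diff hz).cpow (differentiableAt_const _) (zeta_mem_slitPlane hz)
  unfold G
  fun_prop

lemma G_analyticOnNhd (a : ℝ) : AnalyticOnNhd ℂ (G a) U :=
  (DifferentiableOn.analyticOnNhd
    (fun z hz => (G_diff a hz).differentiableWithinAt) (by
      have h1 : IsOpen {z : ℂ | z + 1 ∈ Complex.slitPlane} :=
        Complex.isOpen_slitPlane.preimage (by continuity)
      have h2 : IsOpen {z : ℂ | z.re < 1} :=
        isOpen_lt Complex.continuous_re continuous_const
      exact h1.inter h2))

-- real values
lemma sqz_ofReal {x : ℝ} (hx : 0 ≤ x) : sqz (x : ℂ) = (Real.sqrt x : ℂ) := by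
  rw [Real.sqrt_eq_rpow, sqz]
  rw [Complex.ofReal_cpow hx]
  norm_num

lemma G_real (a : ℝ) {x : ℝ} (hx : x ∈ Set.Ioo (-1:ℝ) 1) :
    G a (x : ℂ) = ((Real.cos (a * Real.arccos x) : ℝ) : ℂ) := by
  obtain ⟨hx1, hx2⟩ := hx
  set θ := Real.arccos x with hθ
  have hθ1 : 0 < θ := Real.arccos_pos.mpr hx2
  have hθ2 : θ ≤ Real.pi := Real.arccos_le_pi x
  have hsq1 : sqz (1 - (x:ℂ)) = (Real.sqrt (1 - x) : ℂ) := by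
    rw [show (1 - (x:ℂ)) = ((1 - x : ℝ) : ℂ) by push_cast; ring]
    exact sqz_ofReal (by linarith)
  have hsq2 : sqz ((x:ℂ) + 1) = (Real.sqrt (x + 1) : ℂ) := by
    rw [show ((x:ℂ) + 1) = ((x + 1 : ℝ) : ℂ) by push_cast; ring]
    exact sqz_ofReal (by linarith)
  have hz : zeta (x : ℂ) = Complex.exp (θ * Complex.I) := by
    rw [Complex.exp_mul_I, zeta, hsq1, hsq2]
    have hs : Real.sqrt (1 - x) * Real.sqrt (x + 1) = Real.sin θ := by
      rw [← Real.sqrt_mul (by linarith), Real.sin_arccos]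
      ring_nf
    have hc : Real.cos θ = x := Real.cos_arccos (by linarith) (by linarith)
    rw [← Complex.ofReal_sin, ← Complex.ofReal_cos, hc, ← hs]
    push_cast
    ring
  have hlog : Complex.log (zeta (x:ℂ)) = θ * Complex.I := by
    rw [hz, Complex.log_exp]
    · simp; linarith [Real.pi_pos]
    · simpa using hθ2
  have hne : zeta (x:ℂ) ≠ 0 := zeta_ne_zero _
  rw [G, Complex.cpow_def_of_ne_zero hne, Complex.cpow_def_of_ne_zero hne, hlog]
  have h2c := Complex.two_cos (x := ((a * θ : ℝ) : ℂ))
  rw [show ((Real.cos (a * θ) : ℝ) : ℂ) = Complex.cos ((a*θ :ℝ):ℂ) from Complex.ofReal_cos _]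
  have : (((a * θ : ℝ)):ℂ) * Complex.I = ↑θ * Complex.I * ↑a := by push_cast; ring
  rw [this] at h2c
  have hneg : (-(a*θ:ℝ) : ℂ) * Complex.I = ↑θ * Complex.I * (-(a:ℂ)) := by push_cast; ring
  rw [hneg] at h2c
  simp only [Complex.ofReal_neg, mul_neg, neg_mul] at h2c ⊢
  linear_combination -h2c/2

lemma sqz_re {v : ℂ} (hv : v ≠ 0) :
    (sqz v).re = Real.sqrt (‖v‖) * Real.cos (Complex.arg v / 2) := by
  rw [sqz, Complex.cpow_def_of_ne_zero hv, Complex.exp_re]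
  have h1 : (Complex.log v * (1/2)).re = Real.log (‖v‖) / 2 := by
    simp [Complex.mul_re, Complex.log_re, Complex.log_im]
    ring
  have h2 : (Complex.log v * (1/2)).im = Complex.arg v / 2 := by
    simp [Complex.mul_im, Complex.log_re, Complex.log_im]
    ring
  rw [h1, h2, Real.sqrt_eq_rpow, Real.rpow_def_of_pos (norm_pos_iff.mpr hv)]
  ring_nf

lemma sqz_im {v : ℂ} (hv : v ≠ 0) :
    (sqz v).im = Real.sqrt (‖v‖) * Real.sin (Complex.arg v / 2) := by
  rw [sqz, Complex.cpow_def_of_ne_zero hv, Complex.exp_im]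
  have h1 : (Complex.log v * (1/2)).re = Real.log (‖v‖) / 2 := by
    simp [Complex.mul_re, Complex.log_re, Complex.log_im]
    ring
  have h2 : (Complex.log v * (1/2)).im = Complex.arg v / 2 := by
    simp [Complex.mul_im, Complex.log_re, Complex.log_im]
    ring
  rw [h1, h2, Real.sqrt_eq_rpow, Real.rpow_def_of_pos (norm_pos_iff.mpr hv)]
  ring_nf

lemma abs_sqz (v : ℂ) : ‖sqz v‖ = Real.sqrt (‖v‖) := by
  rcases eq_or_ne v 0 with rfl | hv
  · simp [sqz]
  · rw [sqz, Complex.norm_cpow_of_ne_zero hv]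
    simp [Real.sqrt_eq_rpow]

lemma sqz_re_pos {v : ℂ} (hv : v ∈ Complex.slitPlane) : 0 < (sqz v).re := by
  have hv0 : v ≠ 0 := Complex.slitPlane_ne_zero hv
  rw [sqz_re hv0]
  apply mul_pos (Real.sqrt_pos.mpr (norm_pos_iff.mpr hv0))
  apply Real.cos_pos_of_mem_Ioo
  have h1 := Complex.neg_pi_lt_arg v
  have h2 : Complex.arg v ≠ Real.pi := by
    intro h
    rcases Complex.arg_eq_pi_iff.mp h with ⟨hre, him⟩
    rcases Complex.mem_slitPlane_iff.mp hv with h | h <;> [linarith; exact h him]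
  have h3 : Complex.arg v < Real.pi := lt_of_le_of_ne (Complex.arg_le_pi v) h2
  constructor <;> [linarith; linarith]

set_option maxHeartbeats 1000000 in
lemma zeta_im_pos {z : ℂ} (hz : z + 1 ∈ Complex.slitPlane)
    (hsmall : ‖z + 1‖ < 1/100) : 0 < (zeta z).im := by
  set w := sqz (z + 1) with hwdef
  set q := sqz (1 - z) with hqdef
  set x := w.re with hxdef
  set y := w.im with hydef
  have hw2 : w ^ 2 = z + 1 := sq_sqz (z + 1)
  have hx : 0 < x := sqz_re_pos hz
  have habsw : ‖w‖ ≤ 1/10 := by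
    rw [hwdef, abs_sqz]
    have h1 : Real.sqrt (‖z+1‖) ≤ Real.sqrt (1/100) :=
      Real.sqrt_le_sqrt hsmall.le
    have h2 : Real.sqrt (1/100 : ℝ) = 1/10 := by
      rw [show (1/100:ℝ) = (1/10)^2 by norm_num, Real.sqrt_sq (by norm_num)]
    linarith
  have hyb : |y| ≤ 1/10 := le_trans (Complex.abs_im_le_norm w) habsw
  have hxb : x ≤ 1/10 := le_trans (Complex.re_le_norm w) habsw
  -- z in terms of x, y
  have hre : z.re = x^2 - y^2 - 1 := by
    have := congrArg Complex.re hw2.symm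
    simp only [Complex.add_re, Complex.one_re, pow_two, Complex.mul_re] at this
    rw [← hxdef, ← hydef] at this
    linarith
  have him : z.im = 2*x*y := by
    have := congrArg Complex.im hw2.symm
    simp only [Complex.add_im, Complex.one_im, pow_two, Complex.mul_im] at this
    rw [← hxdef, ← hydef] at this
    linarith
  -- facts about v = 1 - z
  have hvre : (199:ℝ)/100 ≤ (1 - z).re := by
    simp only [Complex.sub_re, Complex.one_re, hre]
    nlinarith [sq_nonneg y]
  have hvne : (1 - z) ≠ 0 := by
    intro h
    have := congrArg Complex.re h
    simp only [Complex.zero_re] at this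
    rw [this] at hvre
    norm_num at hvre
  have habsv : (199:ℝ)/100 ≤ ‖1 - z‖ := le_trans hvre (Complex.re_le_norm _)
  have hsqv : (141:ℝ)/100 ≤ Real.sqrt (‖1 - z‖) := by
    nlinarith [Real.sq_sqrt (norm_nonneg (1 - z)), Real.sqrt_nonneg (‖1 - z‖)]
  have hargv : |Complex.arg (1 - z)| ≤ Real.pi / 2 :=
    Complex.abs_arg_le_pi_div_two_iff.mpr (by linarith)
  have hpi := Real.pi_pos
  have hcos : Real.sqrt 2 / 2 ≤ Real.cos (Complex.arg (1 - z) / 2) := by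
    rw [← Real.cos_abs]
    have h1 : |Complex.arg (1 - z) / 2| ≤ Real.pi / 4 := by
      rw [abs_div]
      rw [abs_of_pos (by norm_num : (0:ℝ) < 2)]
      linarith
    calc Real.sqrt 2 / 2 = Real.cos (Real.pi / 4) := (Real.cos_pi_div_four).symm
    _ ≤ Real.cos |Complex.arg (1 - z) / 2| :=
        Real.cos_le_cos_of_nonneg_of_le_pi (abs_nonneg _) (by linarith) (by linarith)
  have hsqrt2 : (14:ℝ)/10 ≤ Real.sqrt 2 := by
    nlinarith [Real.sq_sqrt (show (0:ℝ) ≤ 2 by norm_num), Real.sqrt_nonneg 2]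
  have hqre : (9:ℝ)/10 ≤ q.re := by
    rw [hqdef, sqz_re hvne]
    nlinarith [Real.sqrt_nonneg (‖1 - z‖)]
  have hsign : 0 ≤ -(q.im * y) := by
    have hqim : q.im = Real.sqrt (‖1 - z‖) * Real.sin (Complex.arg (1 - z) / 2) := by
      rw [hqdef, sqz_im hvne]
    have hvim : (1 - z).im = -(2*x*y) := by
      simp only [Complex.sub_im, Complex.one_im, him]
      ring
    rcases le_or_gt 0 y with hy0 | hy0
    · -- im v ≤ 0, so arg v ≤ 0, sin ≤ 0, q.im ≤ 0
      have h1 : (1 - z).im ≤ 0 := by rw [hvim]; nlinarith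
      have h2 : Complex.arg (1 - z) ≤ 0 := by
        by_contra h
        push_neg at h
        have := Complex.arg_neg_iff (z := 1 - z)
        rcases lt_or_eq_of_le h1 with h3 | h3
        · linarith [this.mpr h3]
        · have h4 : Complex.arg (1 - z) = 0 := by
            rw [Complex.arg_eq_zero_iff]
            constructor
            · linarith
            · exact h3
          linarith
      have h3 : Real.sin (Complex.arg (1 - z) / 2) ≤ 0 :=
        Real.sin_nonpos_of_nonpos_of_neg_pi_le (by linarith)
          (by linarith [(abs_le.mp hargv).1])
      have hq0 : q.im ≤ 0 := by
        rw [hqim]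
        exact mul_nonpos_of_nonneg_of_nonpos (Real.sqrt_nonneg _) h3
      exact neg_nonneg.mpr (mul_nonpos_of_nonpos_of_nonneg hq0 hy0)
    · -- y < 0: im v > 0, arg v ≥ 0, sin ≥ 0, q.im ≥ 0
      have h1 : 0 ≤ (1 - z).im := by rw [hvim]; nlinarith
      have h2 : 0 ≤ Complex.arg (1 - z) := Complex.arg_nonneg_iff.mpr h1
      have h3 : 0 ≤ Real.sin (Complex.arg (1 - z) / 2) :=
        Real.sin_nonneg_of_nonneg_of_le_pi (by linarith)
          (by linarith [(abs_le.mp hargv).2])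
      have hq0 : 0 ≤ q.im := by
        rw [hqim]
        exact mul_nonneg (Real.sqrt_nonneg _) h3
      rw [neg_nonneg]
      exact mul_nonpos_of_nonneg_of_nonpos hq0 hy0.le
  -- assemble
  have hzeta_im : (zeta z).im = 2*x*y + (q.re * x - q.im * y) := by
    simp only [zeta, Complex.add_im, Complex.mul_im, Complex.mul_re, Complex.I_re,
      Complex.I_im, ← hqdef, ← hwdef, ← hxdef, ← hydef, him]
    ring
  rw [hzeta_im]
  rcases abs_le.mp hyb with ⟨hy1, hy2⟩
  nlinarith

def F (w : ℂ) : ℂ := 1 - w^2 - Complex.I * sqz (2 - w^2) * w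

def Phi (a : ℝ) (w : ℂ) : ℂ :=
  (Complex.exp (((a * Real.pi : ℝ) : ℂ) * Complex.I + (a:ℂ) * Complex.log (F w)) +
   Complex.exp (-(((a * Real.pi : ℝ) : ℂ) * Complex.I) - (a:ℂ) * Complex.log (F w))) / 2

lemma G_eq_Phi (a : ℝ) {z : ℂ} (hz : z + 1 ∈ Complex.slitPlane)
    (hsmall : ‖z + 1‖ < 1/100) : G a z = Phi a (sqz (z + 1)) := by
  set w := sqz (z + 1) with hwdef
  have hw2 : w ^ 2 = z + 1 := sq_sqz _
  have hF : F w = - zeta z := by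
    rw [F, zeta, show (2:ℂ) - w^2 = 1 - z by rw [hw2]; ring, ← hwdef]
    linear_combination -hw2
  have him := zeta_im_pos hz hsmall
  have hne : zeta z ≠ 0 := zeta_ne_zero z
  have hlog : Complex.log (zeta z) = Complex.log (F w) + (Real.pi : ℂ) * Complex.I := by
    apply Complex.ext
    · simp [Complex.add_re, Complex.log_re, hF, map_neg, Complex.mul_re, Complex.I_re,
        Complex.I_im]
    · simp only [Complex.add_im, Complex.log_im, hF, Complex.mul_im, Complex.I_re, Complex.I_im,
        Complex.ofReal_re, Complex.ofReal_im]
      rw [Complex.arg_neg_eq_arg_sub_pi_of_im_pos him]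
      ring
  have e1 : Complex.log (zeta z) * (a:ℂ) =
      ((a * Real.pi : ℝ) : ℂ) * Complex.I + (a:ℂ) * Complex.log (F w) := by
    rw [hlog]; push_cast; ring
  have e2 : Complex.log (zeta z) * ((-a:ℝ):ℂ) =
      -(((a * Real.pi : ℝ) : ℂ) * Complex.I) - (a:ℂ) * Complex.log (F w) := by
    rw [hlog]; push_cast; ring
  rw [G, Complex.cpow_def_of_ne_zero hne, Complex.cpow_def_of_ne_zero hne, Phi]
  rw [show ((-a : ℝ):ℂ) = -(a:ℂ) from by push_cast; ring] at e2
  rw [e1, e2]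

lemma F_zero : F 0 = 1 := by simp [F]

lemma sqz_two : sqz (2 : ℂ) = (Real.sqrt 2 : ℂ) := by
  simpa using sqz_ofReal (by norm_num : (0:ℝ) ≤ 2)

lemma two_sub_sq_mem {w : ℂ} (hw : ‖w‖ < 1) : 2 - w^2 ∈ Complex.slitPlane := by
  rw [Complex.mem_slitPlane_iff]
  left
  have h1 : |(w^2).re| ≤ ‖w^2‖ := Complex.abs_re_le_norm _
  have h2 : ‖w^2‖ < 1 := by
    rw [norm_pow]
    nlinarith [norm_nonneg w]
  have h3 : ((2:ℂ) - w^2).re = 2 - (w^2).re := by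
    simp [Complex.sub_re]
  rw [h3]
  cases abs_le.mp h1 with
  | intro hl hr => linarith

lemma sqz_diff {v : ℂ} (hv : v ∈ Complex.slitPlane) : DifferentiableAt ℂ sqz v := by
  unfold sqz
  exact differentiableAt_id.cpow (differentiableAt_const _) (by simpa using hv)

lemma F_diff {w : ℂ} (hw : ‖w‖ < 1) : DifferentiableAt ℂ F w := by
  have h1 : DifferentiableAt ℂ (fun w : ℂ => sqz (2 - w^2)) w := by
    have := (sqz_diff (two_sub_sq_mem hw)).comp w (f := fun w : ℂ => 2 - w^2) (by fun_prop)
    exact this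
  unfold F sqz at *
  fun_prop

lemma F_cont : ContinuousOn F {w : ℂ | ‖w‖ < 1} := by
  intro w hw
  exact (F_diff hw).continuousAt.continuousWithinAt

def V : Set ℂ := {w : ℂ | ‖w‖ < 1} ∩ F ⁻¹' Complex.slitPlane

lemma V_open : IsOpen V :=
  F_cont.isOpen_inter_preimage (isOpen_lt continuous_norm continuous_const)
    Complex.isOpen_slitPlane

lemma zero_mem_V : (0:ℂ) ∈ V := by
  constructor
  · simp
  · simp only [Set.mem_preimage, F_zero]
    simp [Complex.mem_slitPlane_iff]

lemma Phi_diffOn (a : ℝ) : DifferentiableOn ℂ (Phi a) V := by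
  intro w hw
  apply DifferentiableAt.differentiableWithinAt
  have hF := F_diff hw.1
  have hlog : DifferentiableAt ℂ (fun w => Complex.log (F w)) w :=
    hF.clog hw.2
  unfold Phi
  fun_prop

lemma Phi_analyticAt (a : ℝ) : AnalyticAt ℂ (Phi a) 0 :=
  (Phi_diffOn a).analyticAt (V_open.mem_nhds zero_mem_V)

lemma Phi_zero (a : ℝ) : Phi a 0 = ((Real.cos (a * Real.pi) : ℝ) : ℂ) := by
  rw [Phi, F_zero, Complex.log_one, mul_zero, add_zero, sub_zero, Complex.exp_mul_I]
  rw [show -(((a * Real.pi : ℝ) : ℂ) * Complex.I) = ((-(a * Real.pi) : ℝ) : ℂ) * Complex.I by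
    push_cast; ring, Complex.exp_mul_I]
  rw [Complex.ofReal_neg, Complex.cos_neg, Complex.sin_neg, Complex.ofReal_cos]
  ring

lemma F_hasDeriv : HasDerivAt F (-(Complex.I * (Real.sqrt 2 : ℂ))) 0 := by
  have hg : DifferentiableAt ℂ (fun w : ℂ => sqz (2 - w^2)) 0 := by
    have := (sqz_diff (v := (2:ℂ) - 0^2) (by
      rw [Complex.mem_slitPlane_iff]; left; norm_num)).comp (0:ℂ)
      (f := fun w : ℂ => 2 - w^2) (by fun_prop)
    exact this
  have h1 : HasDerivAt (fun w : ℂ => Complex.I * sqz (2 - w^2))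
      (Complex.I * deriv (fun w : ℂ => sqz (2 - w^2)) 0) 0 :=
    (hg.hasDerivAt).const_mul Complex.I
  have h2 : HasDerivAt (fun w : ℂ => Complex.I * sqz (2 - w^2) * w)
      ((Complex.I * deriv (fun w : ℂ => sqz (2 - w^2)) 0) * 0
        + (Complex.I * sqz (2 - 0^2)) * 1) 0 := h1.mul (hasDerivAt_id 0)
  have h3 : HasDerivAt (fun w : ℂ => 1 - w^2) (0 - 2 * 0 ^ 1) 0 :=
    (hasDerivAt_const 0 (1:ℂ)).sub (by simpa using hasDerivAt_pow 2 (0:ℂ))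
  have h4 := h3.sub h2
  have : F = fun w : ℂ => (1 - w^2) - Complex.I * sqz (2 - w^2) * w := rfl
  rw [this]
  refine h4.congr_deriv (Eq.symm ?_)
  simp [sqz_two]

lemma Phi_hasDeriv (a : ℝ) :
    HasDerivAt (Phi a) (((a * Real.sqrt 2 * Real.sin (a * Real.pi) : ℝ) : ℂ)) 0 := by
  have hF0 : F 0 ∈ Complex.slitPlane := by
    rw [F_zero]; simp [Complex.mem_slitPlane_iff]
  have hlog : HasDerivAt (fun w => Complex.log (F w))
      (-(Complex.I * (Real.sqrt 2 : ℂ)) / F 0) 0 := F_hasDeriv.clog hF0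
  set m : ℂ := -(Complex.I * (Real.sqrt 2 : ℂ)) / F 0 with hm
  set C : ℂ := ((a * Real.pi : ℝ) : ℂ) * Complex.I with hC
  have h1 : HasDerivAt (fun w => C + (a:ℂ) * Complex.log (F w)) ((a:ℂ) * m) 0 := by
    simpa using (hlog.const_mul (a:ℂ)).const_add C
  have h2 : HasDerivAt (fun w => -C - (a:ℂ) * Complex.log (F w)) (-((a:ℂ) * m)) 0 := by
    simpa [sub_eq_add_neg] using ((hlog.const_mul (a:ℂ)).neg.const_add (-C))
  have e1 := h1.cexp
  have e2 := h2.cexp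
  have hsum := (e1.add e2).div_const 2
  have hPhi : Phi a = fun w =>
      (Complex.exp (C + (a:ℂ) * Complex.log (F w)) +
        Complex.exp (-C - (a:ℂ) * Complex.log (F w))) / 2 := rfl
  rw [hPhi]
  refine hsum.congr_deriv (Eq.symm ?_)
  rw [F_zero, Complex.log_one, mul_zero, add_zero, sub_zero, hm, F_zero, div_one, hC]
  rw [Complex.exp_mul_I]
  rw [show -(((a * Real.pi : ℝ) : ℂ) * Complex.I) = ((-(a * Real.pi) : ℝ) : ℂ) * Complex.I by
    push_cast; ring, Complex.exp_mul_I]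
  rw [Complex.ofReal_neg, Complex.cos_neg, Complex.sin_neg]
  push_cast [Complex.ofReal_sin]
  linear_combination (a:ℂ) * (Real.sqrt 2 : ℂ) * Complex.sin ((a:ℂ) * (Real.pi:ℂ)) * Complex.I_sq

lemma psi_bigO (a : ℝ) :
    (fun w : ℂ => Phi a w - ((Real.cos (a * Real.pi) : ℝ) : ℂ)
      - ((a * Real.sqrt 2 * Real.sin (a * Real.pi) : ℝ) : ℂ) * w)
      =O[nhds (0:ℂ)] (fun w => w ^ 2) := by
  set c1 : ℂ := ((Real.cos (a * Real.pi) : ℝ) : ℂ) with hc1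
  set c2 : ℂ := ((a * Real.sqrt 2 * Real.sin (a * Real.pi) : ℝ) : ℂ) with hc2
  set ψ : ℂ → ℂ := fun w => Phi a w - c1 - c2 * w with hψdef
  have hψa : AnalyticAt ℂ ψ 0 :=
    (((Phi_analyticAt a).sub analyticAt_const).sub (analyticAt_const.mul analyticAt_id))
  obtain ⟨p, hp⟩ := hψa
  have hψ0 : ψ 0 = 0 := by rw [hψdef]; simp only [Phi_zero, mul_zero, sub_zero, hc1, sub_self]
  have hψd : HasDerivAt ψ 0 0 := by
    have h1 := (Phi_hasDeriv a).sub_const c1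
    have h2 : HasDerivAt (fun w : ℂ => c2 * w) c2 0 := by
      simpa using (hasDerivAt_id (0:ℂ)).const_mul c2
    have h3 := h1.sub h2
    refine h3.congr_deriv (Eq.symm ?_)
    rw [hc2, sub_self]
  have h0 : p.coeff 0 = 0 := by
    have h := hp.coeff_zero (fun _ => 1)
    rw [hψ0] at h
    exact h
  have h1 : p.coeff 1 = 0 := by
    have := hp.deriv
    rw [hψd.deriv] at this
    exact this.symm
  have hps : ∀ y : ℂ, p.partialSum 2 y = 0 := by
    intro y
    simp [FormalMultilinearSeries.partialSum, Finset.sum_range_succ,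
      FormalMultilinearSeries.apply_eq_pow_smul_coeff, h0, h1]
  have hO := hp.isBigO_sub_partialSum_pow 2
  have hO2 : ψ =O[nhds (0:ℂ)] (fun y => ‖y‖ ^ 2) := by
    have : (fun y : ℂ => ψ (0 + y) - p.partialSum 2 y) = ψ := by
      funext y
      rw [hps y, zero_add, sub_zero]
    rwa [this] at hO
  exact hO2.trans (Asymptotics.isBigO_of_le _ (fun y => by simp))


end Cheb6
end

open Cheb6 Complex in
/-- Expansion of the generalized Chebyshev function at `−1`:
`T_a(z) = cos(aπ) + a√2 sin(aπ) √(z+1) + O(z+1)` as `z → −1` in the cut plane. -/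
theorem stmt6 (a : ℝ) (ha : 0 ≤ a) (T : ℂ → ℂ) (hT : IsChebyshev a T) :
    (fun z : ℂ => T z - ((Real.cos (a * Real.pi) : ℝ) : ℂ)
        - ((a * Real.sqrt 2 * Real.sin (a * Real.pi) : ℝ) : ℂ) * (z + 1) ^ ((1 : ℂ) / 2))
      =O[nhdsWithin (-1 : ℂ) cutC] (fun z : ℂ => z + 1) := by
  classical
  set l := nhdsWithin (-1 : ℂ) cutC with hl
  set c1 : ℂ := ((Real.cos (a * Real.pi) : ℝ) : ℂ) with hc1
  set c2 : ℂ := ((a * Real.sqrt 2 * Real.sin (a * Real.pi) : ℝ) : ℂ) with hc2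
  have hTanal : AnalyticOnNhd ℂ T U :=
    DifferentiableOn.analyticOnNhd
      (fun z hz => (hT.1 z (U_sub hz)).differentiableWithinAt) U_open
  have hEqOn : Set.EqOn T (G a) U := by
    apply hTanal.eqOn_of_preconnected_of_frequently_eq (G_analyticOnNhd a)
      U_preconnected zero_mem_U
    have htend : Tendsto (fun t : ℝ => (t : ℂ)) (nhdsWithin 0 (Set.Ioi 0))
        (nhdsWithin (0:ℂ) {(0:ℂ)}ᶜ) := by
      apply tendsto_nhdsWithin_of_tendsto_nhds_of_eventually_within
      · exact Complex.continuous_ofReal.continuousAt.tendsto.mono_left nhdsWithin_le_nhds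
      · filter_upwards [self_mem_nhdsWithin] with t ht
        simp only [Set.mem_compl_iff, Set.mem_singleton_iff]
        exact_mod_cast ne_of_gt ht
    apply htend.frequently
    apply Filter.Eventually.frequently
    filter_upwards [Ioo_mem_nhdsGT_of_mem (⟨le_refl (0:ℝ), by norm_num⟩ : (0:ℝ) ∈ Set.Ico 0 1)]
      with t ht
    rw [hT.2 t (Set.mem_Ioc.mpr ⟨by linarith [ht.1], ht.2.le⟩),
      G_real a ⟨by linarith [ht.1], ht.2⟩]
  have hsmall : ∀ᶠ z in l, ‖z + 1‖ < 1/100 := by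
    apply nhdsWithin_le_nhds
    have hb := Metric.ball_mem_nhds (-1:ℂ) (by norm_num : (0:ℝ) < 1/100)
    filter_upwards [hb] with z hz
    rw [Metric.mem_ball, Complex.dist_eq] at hz
    simpa [sub_neg_eq_add] using hz
  have hcut : ∀ᶠ z in l, z ∈ cutC := self_mem_nhdsWithin
  have hfe : ∀ᶠ z in l, T z - c1 - c2 * (z + 1) ^ ((1:ℂ)/2)
      = Phi a (sqz (z+1)) - c1 - c2 * sqz (z+1) := by
    filter_upwards [hsmall, hcut] with z hz1 hz2
    have hsp : z + 1 ∈ Complex.slitPlane := mem_cutC.mp hz2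
    have hU : z ∈ U := by
      refine ⟨hsp, ?_⟩
      have h1 : |(z+1).re| ≤ ‖z+1‖ := Complex.abs_re_le_norm _
      have h2 : (z+1).re = z.re + 1 := by simp [Complex.add_re]
      cases abs_le.mp h1 with
      | intro hl hr => rw [h2] at hr; linarith
    rw [hEqOn hU, G_eq_Phi a hsp hz1]
    rfl
  have hw0 : Tendsto (fun z : ℂ => sqz (z+1)) l (nhds (0:ℂ)) := by
    rw [show (fun z : ℂ => sqz (z+1)) = fun z : ℂ => sqz (z+1) from rfl]
    have habs : Tendsto (fun z : ℂ => ‖z+1‖) l (nhds 0) := by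
      have hc : Continuous (fun z : ℂ => ‖z+1‖) :=
        continuous_norm.comp (continuous_id.add continuous_const)
      have := hc.tendsto (-1:ℂ)
      simp only [neg_add_cancel, norm_zero] at this
      exact this.mono_left nhdsWithin_le_nhds
    have hsq : Tendsto (fun z : ℂ => Real.sqrt (‖z+1‖)) l (nhds 0) := by
      have := (Real.continuous_sqrt.tendsto 0).comp habs
      simpa [Function.comp_def] using this
    rw [tendsto_zero_iff_norm_tendsto_zero]
    refine hsq.congr (fun z => ?_)
    rw [abs_sqz]
  have hO := (psi_bigO a).comp_tendsto hw0
  refine IsBigO.congr' hO ?_ ?_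
  · filter_upwards [hfe] with z hz
    exact hz.symm
  · filter_upwards with z
    exact sq_sqz (z+1)
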